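/- Every UBG-space has polynomial growth rate. Precisely: let Y be a metric space that is (N,R)-bounded, fix ρ ∈ (1/2,1), and set k = ln N(ρ)/ln(1/ρ). Then for every δ > 0 with ((2ρ−1)/ρ)·δ ≥ R(ρ), every ball of radius r ≥ δ in Y contains at most d·r^k points that are pairwise at distance ≥ δ, where d = (ρδ)^{−k}. -/
import Mathlib


open Metric Set ENNReal

/-- A subset `A` of a metric space is `(N,R)`-bounded: for every `ρ ∈ (0,1)` and every
`r ≥ R ρ`, every ball of radius `r` in `A` (with the induced metric) contains at most
`N ρ` points that are pairwise at distance `≥ ρ·r`. -/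
def SubsetNRBounded {X : Type*} [MetricSpace X] (A : Set X) (N : ℝ → ℕ) (R : ℝ → ℝ) : Prop :=
  ∀ ρ : ℝ, 0 < ρ → ρ < 1 → ∀ r : ℝ, R ρ ≤ r → ∀ a ∈ A, ∀ S : Finset X,
    (S : Set X) ⊆ A ∩ Metric.closedBall a r →
    ((S : Set X).Pairwise fun p q => ρ * r ≤ dist p q) → S.card ≤ N ρ

/-- A metric space is `(N,R)`-bounded. -/
def IsNRBounded (X : Type*) [MetricSpace X] (N : ℝ → ℕ) (R : ℝ → ℝ) : Prop :=
  SubsetNRBounded (Set.univ : Set X) N R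

/-- A metric space has uniformly bounded growth rate (is an UBG-space) if it is
`(N,R)`-bounded for some `N ∈ 𝒩` and `R ∈ ℛ`. -/
def IsUBG (X : Type*) [MetricSpace X] : Prop :=
  ∃ N : ℝ → ℕ, ∃ R : ℝ → ℝ, (∀ ρ, 0 ≤ R ρ) ∧ IsNRBounded X N R

/-- Every finite set contains a maximal `s`-separated subset, which then `s`-covers it. -/
lemma exists_maximal_separated {Y : Type*} [MetricSpace Y] (S : Finset Y) (s : ℝ) (hs : 0 < s) :
    ∃ T : Finset Y, T ⊆ S ∧ ((T : Set Y).Pairwise fun p q => s ≤ dist p q) ∧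
      ∀ x ∈ S, ∃ t ∈ T, dist x t < s := by
  classical
  set F := S.powerset.filter (fun (T : Finset Y) => (T : Set Y).Pairwise fun p q => s ≤ dist p q) with hF
  have hne : F.Nonempty := ⟨∅, by simp [hF]⟩
  obtain ⟨T, hTF, hmax⟩ := F.exists_max_image (fun T => T.card) hne
  rw [hF, Finset.mem_filter, Finset.mem_powerset] at hTF
  refine ⟨T, hTF.1, hTF.2, ?_⟩
  intro x hx
  by_contra h
  push_neg at h
  have hxT : x ∉ T := fun hxT => absurd (h x hxT) (by simp [hs.le, not_lt.2 dist_nonneg, hs])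
  have hins : insert x T ∈ F := by
    rw [hF, Finset.mem_filter, Finset.mem_powerset]
    refine ⟨Finset.insert_subset hx hTF.1, ?_⟩
    rw [Finset.coe_insert]
    refine Set.pairwise_insert.2 ⟨hTF.2, fun b hb _ => ⟨?_, ?_⟩⟩
    · exact h b hb
    · rw [dist_comm]; exact h b hb
  have := hmax _ hins
  simp [Finset.card_insert_of_notMem hxT] at this

/-- Lemma 2.5: every UBG space has polynomial growth rate.  If `Y` is `(N,R)`-bounded,
`ρ ∈ (1/2,1)`, `k = ln N(ρ)/ln(1/ρ)`, and `δ > 0` satisfies `((2ρ-1)/ρ)·δ ≥ R ρ`, then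
every ball of radius `r ≥ δ` in `Y` contains at most `(ρδ)^{-k}·r^k` points which are
pairwise at distance `≥ δ`. -/
theorem isUBG_polynomial_growth {Y : Type*} [MetricSpace Y] (N : ℝ → ℕ) (R : ℝ → ℝ)
    (hR : ∀ ρ, 0 ≤ R ρ) (hY : IsNRBounded Y N R) (ρ : ℝ) (hρ1 : 1 / 2 < ρ) (hρ2 : ρ < 1)
    (δ : ℝ) (hδ : 0 < δ) (hδR : R ρ ≤ (2 * ρ - 1) / ρ * δ) :
    ∀ r : ℝ, δ ≤ r → ∀ (c : Y) (S : Finset Y), (S : Set Y) ⊆ Metric.closedBall c r →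
      ((S : Set Y).Pairwise fun p q => δ ≤ dist p q) →
      (S.card : ℝ) ≤ (ρ * δ) ^ (-(Real.log (N ρ) / Real.log (1 / ρ))) *
        r ^ (Real.log (N ρ) / Real.log (1 / ρ)) := by
  classical
  have hρ0 : (0 : ℝ) < ρ := by linarith
  set k : ℝ := Real.log (N ρ) / Real.log (1 / ρ) with hk
  have hlogρ : 0 < Real.log (1 / ρ) := Real.log_pos (by rw [lt_div_iff₀ hρ0]; linarith)
  have hk0 : 0 ≤ k := by
    apply div_nonneg _ hlogρ.le
    rcases Nat.eq_zero_or_pos (N ρ) with h | h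
    · simp [h]
    · exact Real.log_natCast_nonneg _
  have hρδ : 0 < ρ * δ := mul_pos hρ0 hδ
  -- R ρ ≤ δ
  have hRδ : R ρ ≤ δ := le_trans hδR (by
    rw [div_mul_eq_mul_div, div_le_iff₀ hρ0]
    nlinarith)
  -- N = (1/ρ)^k when N ≥ 1
  have hNval : 1 ≤ N ρ → ((N ρ : ℝ)) = (1 / ρ) ^ k := by
    intro hN1
    rw [Real.rpow_def_of_pos (by positivity), hk, mul_comm,
      div_mul_cancel₀ _ hlogρ.ne',
      Real.exp_log (by exact_mod_cast Nat.lt_of_lt_of_le Nat.zero_lt_one hN1)]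
  -- the leaf case
  have hleaf : ∀ r : ℝ, δ ≤ r → ρ * r ≤ δ → ∀ (c : Y) (S : Finset Y),
      (S : Set Y) ⊆ Metric.closedBall c r →
      ((S : Set Y).Pairwise fun p q => δ ≤ dist p q) →
      (S.card : ℝ) ≤ (r / (ρ * δ)) ^ k := by
    intro r hδr hρr c S hSb hSsep
    have hr0 : 0 < r := hδ.trans_le hδr
    have hcard : S.card ≤ N ρ := by
      apply hY ρ hρ0 hρ2 r (hRδ.trans hδr) c (Set.mem_univ c) S
      · intro x hx; exact ⟨Set.mem_univ x, hSb hx⟩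
      · exact fun p hp q hq hpq => le_trans hρr (hSsep hp hq hpq)
    rcases Nat.eq_zero_or_pos (N ρ) with h | h
    · have h0 : S.card = 0 := by omega
      rw [h0]
      simpa using Real.rpow_nonneg (div_nonneg hr0.le hρδ.le) k
    · calc (S.card : ℝ) ≤ (N ρ : ℝ) := by exact_mod_cast hcard
        _ = (1 / ρ) ^ k := hNval h
        _ ≤ (r / (ρ * δ)) ^ k := by
            apply Real.rpow_le_rpow (by positivity) _ hk0
            rw [div_le_div_iff₀ hρ0 hρδ]
            nlinarith
  -- main induction
  have key : ∀ n : ℕ, ∀ r : ℝ, δ ≤ r → r ≤ δ / ρ ^ (n + 1) → ∀ (c : Y) (S : Finset Y),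
      (S : Set Y) ⊆ Metric.closedBall c r →
      ((S : Set Y).Pairwise fun p q => δ ≤ dist p q) →
      (S.card : ℝ) ≤ (r / (ρ * δ)) ^ k := by
    intro n
    induction n with
    | zero =>
      intro r hδr hr c S hSb hSsep
      apply hleaf r hδr _ c S hSb hSsep
      rw [pow_one] at hr
      rw [← le_div_iff₀' hρ0]
      exact hr
    | succ n ih =>
      intro r hδr hr c S hSb hSsep
      have hr0 : 0 < r := hδ.trans_le hδr
      by_cases hsmall : ρ * r ≤ δ
      · exact hleaf r hδr hsmall c S hSb hSsep
      push_neg at hsmall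
      -- take a maximal ρr-separated subset T of S
      obtain ⟨T, hTS, hTsep, hTcov⟩ :=
        exists_maximal_separated S (ρ * r) (mul_pos hρ0 hr0)
      have hTcard : T.card ≤ N ρ := by
        apply hY ρ hρ0 hρ2 r (hRδ.trans hδr) c (Set.mem_univ c) T
        · intro x hx; exact ⟨Set.mem_univ x, hSb (hTS hx)⟩
        · exact hTsep
      -- cover S by balls around T
      have hcover : S ⊆ T.biUnion (fun t => S.filter (fun x => dist x t ≤ ρ * r)) := by
        intro x hx
        obtain ⟨t, ht, hdt⟩ := hTcov x hx
        exact Finset.mem_biUnion.2 ⟨t, ht, Finset.mem_filter.2 ⟨hx, hdt.le⟩⟩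
      rcases Nat.eq_zero_or_pos (N ρ) with hN0 | hNpos
      · have hT : T = ∅ := Finset.card_eq_zero.1 (by omega)
        have hS : S = ∅ := Finset.subset_empty.1 (by simpa [hT] using hcover)
        rw [hS]
        simpa using Real.rpow_nonneg (div_nonneg hr0.le hρδ.le) k
      have hsum : (S.card : ℝ) ≤ ∑ t ∈ T, ((S.filter (fun x => dist x t ≤ ρ * r)).card : ℝ) := by
        calc (S.card : ℝ)
            ≤ ((T.biUnion (fun t => S.filter (fun x => dist x t ≤ ρ * r))).card : ℝ) := by
              exact_mod_cast Finset.card_le_card hcover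
          _ ≤ _ := by exact_mod_cast Finset.card_biUnion_le
      have hchild : ∀ t ∈ T, ((S.filter (fun x => dist x t ≤ ρ * r)).card : ℝ)
          ≤ (ρ * r / (ρ * δ)) ^ k := by
        intro t ht
        apply ih (ρ * r) hsmall.le _ t
        · intro x hx
          simp only [Finset.coe_filter, Set.mem_setOf_eq] at hx
          exact hx.2
        · exact Set.Pairwise.mono (by intro x hx; exact (Finset.mem_filter.1
            (by exact_mod_cast hx)).1) hSsep
        · -- ρ * r ≤ δ / ρ ^ (n+1)
          rw [le_div_iff₀ (pow_pos hρ0 _)]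
          have h2 : r * ρ ^ (n + 1 + 1) ≤ δ := by
            rw [← le_div_iff₀ (pow_pos hρ0 _)]
            exact hr
          calc ρ * r * ρ ^ (n + 1) = r * ρ ^ (n + 1 + 1) := by rw [pow_succ]; ring
            _ ≤ δ := h2
      calc (S.card : ℝ) ≤ ∑ t ∈ T, ((S.filter (fun x => dist x t ≤ ρ * r)).card : ℝ) := hsum
        _ ≤ ∑ _t ∈ T, (ρ * r / (ρ * δ)) ^ k := Finset.sum_le_sum hchild
        _ = (T.card : ℝ) * (ρ * r / (ρ * δ)) ^ k := by
            rw [Finset.sum_const, nsmul_eq_mul]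
        _ ≤ (N ρ : ℝ) * (ρ * r / (ρ * δ)) ^ k := by
            apply mul_le_mul_of_nonneg_right (by exact_mod_cast hTcard)
            exact Real.rpow_nonneg (by positivity) k
        _ = (r / (ρ * δ)) ^ k := by
            rw [hNval hNpos,
              ← Real.mul_rpow (by positivity) (div_nonneg (by positivity) hρδ.le)]
            congr 1
            rw [div_mul_div_comm, one_mul, mul_div_mul_left _ _ hρ0.ne']
  -- conclude
  intro r hδr c S hSb hSsep
  have hr0 : 0 < r := hδ.trans_le hδr
  obtain ⟨n, hn⟩ := exists_pow_lt_of_lt_one (div_pos hδ hr0) hρ2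
  have hrn : r ≤ δ / ρ ^ (n + 1) := by
    have h1 : ρ ^ (n + 1) ≤ ρ ^ n := pow_le_pow_of_le_one hρ0.le hρ2.le (by omega)
    have h2 : ρ ^ (n + 1) < δ / r := lt_of_le_of_lt h1 hn
    rw [lt_div_iff₀ hr0] at h2
    rw [le_div_iff₀ (pow_pos hρ0 _)]
    linarith
  calc (S.card : ℝ) ≤ (r / (ρ * δ)) ^ k := key n r hδr hrn c S hSb hSsep
    _ = (ρ * δ) ^ (-k) * r ^ k := by
        rw [Real.div_rpow hr0.le hρδ.le, Real.rpow_neg hρδ.le]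
        ring
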